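/- arXiv:1212.4395 — 13 statements merged into one kernel-verified Lean document; each statement's English description precedes it below -/
import Mathlib

section
/- Let n ≥ 2 be a positive integer, let D be a topological space, and suppose there exists a continuous bijection G : D → S^{n-1}, where S^{n-1} is the unit sphere of ℝⁿ. Then there exists an n-dimensional linear subspace V of the space C(D, ℝ) of continuous real-valued functions on D such that every nonzero f ∈ V attains its maximum at exactly one point of D (i.e., there exists a unique x₀ ∈ D with f(x) ≤ f(x₀) for all x ∈ D). -/
/-- If `n ≥ 2` and there is a continuous bijection from a topological
space `D` onto the unit sphere `S^{n-1}` of `ℝⁿ`, then `C(D, ℝ)` contains an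
`n`-dimensional linear subspace all of whose nonzero elements attain their maximum
at exactly one point of `D`. -/
theorem stmt_0 (n : ℕ) (hn : 2 ≤ n) (D : Type*) [TopologicalSpace D]
    (G : D → Metric.sphere (0 : EuclideanSpace ℝ (Fin n)) 1)
    (hGc : Continuous G) (hGb : Function.Bijective G) :
    ∃ V : Submodule ℝ C(D, ℝ), Module.finrank ℝ V = n ∧
      ∀ f ∈ V, f ≠ 0 → ∃! x₀ : D, ∀ x : D, f x ≤ f x₀ := by
  set E := EuclideanSpace ℝ (Fin n)
  -- the linear map v ↦ (x ↦ ⟪v, G x⟫)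
  have hcont : ∀ v : E, Continuous fun x : D => (inner ℝ v (G x : E) : ℝ) := by
    intro v
    exact (continuous_const.inner ((continuous_subtype_val).comp hGc))
  let L : E →ₗ[ℝ] C(D, ℝ) :=
    { toFun := fun v => ⟨fun x => inner ℝ v (G x : E), hcont v⟩
      map_add' := by
        intro v w
        ext x
        simp [inner_add_left]
      map_smul' := by
        intro c v
        ext x
        simp [inner_smul_left] }
  have hGnorm : ∀ x : D, ‖(G x : E)‖ = 1 := by
    intro x
    have := (G x).2
    simpa [mem_sphere_iff_norm] using this
  have hLinj : Function.Injective L := by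
    rw [← LinearMap.ker_eq_bot, LinearMap.ker_eq_bot']
    intro v hv
    by_contra hvne
    have hv' : ∀ x : D, (inner ℝ v (G x : E) : ℝ) = 0 := by
      intro x
      have := congrFun (congrArg (fun f : C(D, ℝ) => (f : D → ℝ)) hv) x
      exact this
    -- the unit vector in direction v lies on the sphere
    have hnv : ‖v‖ ≠ 0 := norm_ne_zero_iff.mpr hvne
    have hu : (‖v‖⁻¹ • v) ∈ Metric.sphere (0 : E) 1 := by
      simp [mem_sphere_iff_norm, norm_smul, abs_of_nonneg (norm_nonneg v),
        inv_mul_cancel₀ hnv]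
    obtain ⟨x, hx⟩ := hGb.surjective ⟨_, hu⟩
    have : (inner ℝ v (‖v‖⁻¹ • v) : ℝ) = 0 := by
      have := hv' x
      rw [hx] at this
      exact this
    rw [real_inner_smul_right, real_inner_self_eq_norm_sq] at this
    have : ‖v‖ = 0 := by
      rcases mul_eq_zero.mp this with h | h
      · exact absurd h (inv_ne_zero hnv)
      · nlinarith [norm_nonneg v]
    exact hnv this
  refine ⟨LinearMap.range L, ?_, ?_⟩
  · rw [LinearMap.finrank_range_of_inj hLinj]
    simp [E]
  · rintro f hf hfne
    obtain ⟨v, rfl⟩ := hf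
    have hvne : v ≠ 0 := by
      rintro rfl
      apply hfne
      ext x
      simp
    have hnv : ‖v‖ ≠ 0 := norm_ne_zero_iff.mpr hvne
    have hu : (‖v‖⁻¹ • v) ∈ Metric.sphere (0 : E) 1 := by
      simp [mem_sphere_iff_norm, norm_smul, abs_of_nonneg (norm_nonneg v),
        inv_mul_cancel₀ hnv]
    obtain ⟨x₀, hx₀⟩ := hGb.surjective ⟨_, hu⟩
    have hfx₀ : (L v) x₀ = ‖v‖ := by
      show (inner ℝ v (G x₀ : E) : ℝ) = ‖v‖
      rw [hx₀]
      show (inner ℝ v (‖v‖⁻¹ • v) : ℝ) = ‖v‖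
      rw [real_inner_smul_right, real_inner_self_eq_norm_sq]
      field_simp
    have hle : ∀ x : D, (L v) x ≤ ‖v‖ := by
      intro x
      calc (inner ℝ v (G x : E) : ℝ) ≤ ‖v‖ * ‖(G x : E)‖ := real_inner_le_norm v _
        _ = ‖v‖ := by rw [hGnorm x, mul_one]
    refine ⟨x₀, ?_, ?_⟩
    · intro x
      rw [hfx₀]
      exact hle x
    · intro x₁ hx₁
      -- f x₁ = ‖v‖, equality case in Cauchy-Schwarz
      have heq : (inner ℝ v (G x₁ : E) : ℝ) = ‖v‖ * ‖(G x₁ : E)‖ := by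
        have h1 : (L v) x₁ ≤ ‖v‖ := hle x₁
        have h2 : ‖v‖ ≤ (L v) x₁ := hfx₀ ▸ hx₁ x₀
        have : (L v) x₁ = ‖v‖ := le_antisymm h1 h2
        rw [hGnorm x₁, mul_one]
        exact this
      rw [inner_eq_norm_mul_iff_real] at heq
      -- ‖G x₁‖ • v = ‖v‖ • G x₁
      have hGx₁ : (G x₁ : E) = ‖v‖⁻¹ • v := by
        rw [hGnorm x₁, one_smul] at heq
        nth_rewrite 2 [heq]
        rw [smul_smul, inv_mul_cancel₀ hnv, one_smul]
      apply hGb.injective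
      rw [hx₀]
      exact Subtype.ext hGx₁
end

section
/- Let n ≥ 2 be a positive integer and let D be a topological space containing a closed subset Y such that there exist a continuous bijection F : Y → S^{n-1} and a continuous map G : D → ℝⁿ extending F (i.e., G(y) = F(y) for all y ∈ Y) with ‖G(x)‖₂ < 1 for every x ∈ D \ Y. Then there exists an n-dimensional linear subspace V of C(D, ℝ) such that every nonzero f ∈ V attains its maximum at exactly one point of D. -/
open scoped RealInnerProductSpace

/-- Let `n ≥ 2` and let `D` be a topological space containing a closed
subset `Y` admitting a continuous bijection `F : Y → S^{n-1}` which extends to a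
continuous map `G : D → ℝⁿ` with `‖G x‖ < 1` for all `x ∉ Y`. Then `C(D, ℝ)`
contains an `n`-dimensional linear subspace all of whose nonzero elements attain
their maximum at exactly one point of `D`. -/
theorem stmt_4 (n : ℕ) (hn : 2 ≤ n) (D : Type*) [TopologicalSpace D]
    (Y : Set D) (hY : IsClosed Y)
    (F : Y → Metric.sphere (0 : EuclideanSpace ℝ (Fin n)) 1)
    (hFc : Continuous F) (hFb : Function.Bijective F)
    (G : D → EuclideanSpace ℝ (Fin n)) (hGc : Continuous G)
    (hGF : ∀ y : Y, G (y : D) = (F y : EuclideanSpace ℝ (Fin n)))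
    (hGlt : ∀ x : D, x ∉ Y → ‖G x‖ < 1) :
    ∃ V : Submodule ℝ C(D, ℝ), Module.finrank ℝ V = n ∧
      ∀ f ∈ V, f ≠ 0 → ∃! x₀ : D, ∀ x : D, f x ≤ f x₀ := by
  -- the linear map `v ↦ (x ↦ ⟪v, G x⟫)`
  set T : EuclideanSpace ℝ (Fin n) →ₗ[ℝ] C(D, ℝ) :=
    { toFun := fun v => ⟨fun x => ⟪v, G x⟫, by
        exact (continuous_const.inner hGc)⟩
      map_add' := fun v w => by ext x; simp [inner_add_left]
      map_smul' := fun c v => by ext x; simp [inner_smul_left] } with hT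
  -- key fact: for nonzero `v`, the max of `T v` is attained exactly at `F⁻¹(v/‖v‖)`
  have key : ∀ v : EuclideanSpace ℝ (Fin n), v ≠ 0 →
      ∃! x₀ : D, ∀ x : D, (T v) x ≤ (T v) x₀ := by
    intro v hv
    have hvn : (0:ℝ) < ‖v‖ := norm_pos_iff.mpr hv
    set u : EuclideanSpace ℝ (Fin n) := ‖v‖⁻¹ • v with hu
    have hun : ‖u‖ = 1 := by
      rw [hu, norm_smul, norm_inv, norm_norm, inv_mul_cancel₀ hvn.ne']
    obtain ⟨y₀, hy₀⟩ := hFb.surjective ⟨u, by simp [hun]⟩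
    -- value at `y₀` is `‖v‖`
    have hval : (T v) (y₀ : D) = ‖v‖ := by
      have : G (y₀ : D) = u := by rw [hGF y₀, hy₀]
      simp only [hT, ContinuousMap.coe_mk, LinearMap.coe_mk, AddHom.coe_mk, this, hu,
        real_inner_smul_right, real_inner_self_eq_norm_sq]
      field_simp
    -- strict inequality elsewhere
    have hstrict : ∀ x : D, x ≠ (y₀ : D) → (T v) x < ‖v‖ := by
      intro x hx
      by_cases hxY : x ∈ Y
      · have hGx : G x = F ⟨x, hxY⟩ := hGF ⟨x, hxY⟩
        have hFn : ‖(F ⟨x, hxY⟩ : EuclideanSpace ℝ (Fin n))‖ = 1 := by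
          have := (F ⟨x, hxY⟩).2
          simpa [mem_sphere_iff_norm] using this
        have hne : u ≠ (F ⟨x, hxY⟩ : EuclideanSpace ℝ (Fin n)) := by
          intro h
          have : F y₀ = F ⟨x, hxY⟩ := by
            apply Subtype.ext
            rw [hy₀]; exact h
          have := hFb.injective this
          exact hx (by rw [this])
        have hlt : ⟪u, (F ⟨x, hxY⟩ : EuclideanSpace ℝ (Fin n))⟫ < 1 :=
          (inner_lt_one_iff_real_of_norm_eq_one hun hFn).mpr hne
        have : (T v) x = ‖v‖ * ⟪u, (F ⟨x, hxY⟩ : EuclideanSpace ℝ (Fin n))⟫ := by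
          simp only [hT, ContinuousMap.coe_mk, LinearMap.coe_mk, AddHom.coe_mk, hGx, hu,
            real_inner_smul_left]
          field_simp
        rw [this]
        calc ‖v‖ * ⟪u, (F ⟨x, hxY⟩ : EuclideanSpace ℝ (Fin n))⟫ < ‖v‖ * 1 := by
              exact (mul_lt_mul_iff_right₀ hvn).mpr hlt
          _ = ‖v‖ := mul_one _
      · have : (T v) x ≤ ‖v‖ * ‖G x‖ := real_inner_le_norm v (G x)
        calc (T v) x ≤ ‖v‖ * ‖G x‖ := this
          _ < ‖v‖ * 1 := (mul_lt_mul_iff_right₀ hvn).mpr (hGlt x hxY)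
          _ = ‖v‖ := mul_one _
    refine ⟨(y₀ : D), ?_, ?_⟩
    · intro x
      rcases eq_or_ne x (y₀ : D) with h | h
      · rw [h]
      · rw [hval]; exact (hstrict x h).le
    · intro x hmax
      by_contra h
      have h1 := hmax (y₀ : D)
      rw [hval] at h1
      exact absurd h1 (not_le.mpr (hstrict x h))
  -- T is injective
  have hinj : Function.Injective T := by
    rw [injective_iff_map_eq_zero]
    intro v hv0
    by_contra hv
    obtain ⟨x₀, hx₀, _⟩ := key v hv
    have hvn : (0:ℝ) < ‖v‖ := norm_pos_iff.mpr hv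
    set u : EuclideanSpace ℝ (Fin n) := ‖v‖⁻¹ • v with hu
    have hun : ‖u‖ = 1 := by
      rw [hu, norm_smul, norm_inv, norm_norm, inv_mul_cancel₀ hvn.ne']
    obtain ⟨y₀, hy₀⟩ := hFb.surjective ⟨u, by simp [hun]⟩
    have hval : (T v) (y₀ : D) = ‖v‖ := by
      have : G (y₀ : D) = u := by rw [hGF y₀, hy₀]
      simp only [hT, ContinuousMap.coe_mk, LinearMap.coe_mk, AddHom.coe_mk, this, hu,
        real_inner_smul_right, real_inner_self_eq_norm_sq]
      field_simp
    rw [hv0] at hval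
    simp at hval
    exact hv (norm_eq_zero.mp hval.symm)
  refine ⟨LinearMap.range T, ?_, ?_⟩
  · rw [LinearMap.finrank_range_of_inj hinj]
    simp [finrank_euclideanSpace]
  · rintro f ⟨v, rfl⟩ hf
    have hv : v ≠ 0 := by rintro rfl; simp at hf
    exact key v hv
end

section
/- There exists a 2-dimensional linear subspace V of the space C(ℝ, ℝ) of continuous real-valued functions on ℝ such that every nonzero f ∈ V attains its maximum at exactly one point of ℝ. -/
open Real

noncomputable section

namespace Stmt5Aux

/-- angle parameter: maps `[0,∞)` onto `[0, 2π)` increasingly. -/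
def tf (x : ℝ) : ℝ := 2 * π * x / (1 + |x|)

/-- first coordinate of the curve. -/
def pf (x : ℝ) : ℝ := if x ≤ 0 then 1 / (1 + |x|) else Real.cos (tf x)

/-- second coordinate of the curve. -/
def qf (x : ℝ) : ℝ := if x ≤ 0 then 0 else Real.sin (tf x)

lemma habs (x : ℝ) : (0:ℝ) < 1 + |x| := by positivity

lemma cont_tf : Continuous tf :=
  Continuous.div (by continuity) (by continuity) (fun x => (habs x).ne')

lemma cont_pf : Continuous pf := by
  apply Continuous.if_le
    (Continuous.div continuous_const (by continuity) fun x => (habs x).ne')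
    (Real.continuous_cos.comp cont_tf) continuous_id continuous_const
  intro x hx
  simp only [id_eq] at hx
  subst hx
  simp [tf]

lemma cont_qf : Continuous qf := by
  apply Continuous.if_le continuous_const (Real.continuous_sin.comp cont_tf)
    continuous_id continuous_const
  intro x hx
  simp only [id_eq] at hx
  subst hx
  simp [tf]

def P : C(ℝ, ℝ) := ⟨pf, cont_pf⟩
def Q : C(ℝ, ℝ) := ⟨qf, cont_qf⟩

lemma tf_nonneg_eq {x : ℝ} (hx : 0 ≤ x) : tf x = 2 * π * x / (1 + x) := by
  rw [tf, abs_of_nonneg hx]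

lemma tf_mem {x : ℝ} (hx : 0 ≤ x) : 0 ≤ tf x ∧ tf x < 2 * π := by
  have hπ := Real.pi_pos
  rw [tf_nonneg_eq hx]
  constructor
  · positivity
  · rw [div_lt_iff₀ (by linarith)]
    nlinarith

lemma tf_injOn {x y : ℝ} (hx : 0 ≤ x) (hy : 0 ≤ y) (h : tf x = tf y) : x = y := by
  have hπ := Real.pi_pos
  rw [tf_nonneg_eq hx, tf_nonneg_eq hy,
    div_eq_div_iff (by linarith) (by linarith)] at h
  have key : 2 * π * x = 2 * π * y := by linear_combination h
  have h2π : (2 * π) ≠ 0 := by positivity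
  exact mul_left_cancel₀ h2π key

lemma tf_x0 {t₀ : ℝ} (h0 : 0 ≤ t₀) (h1 : t₀ < 2 * π) :
    0 ≤ t₀ / (2 * π - t₀) ∧ tf (t₀ / (2 * π - t₀)) = t₀ := by
  have h2 : 0 < 2 * π - t₀ := by linarith
  have hx : 0 ≤ t₀ / (2 * π - t₀) := div_nonneg h0 h2.le
  refine ⟨hx, ?_⟩
  rw [tf_nonneg_eq hx]
  rw [div_eq_iff]
  · field_simp
    ring
  · have : 0 < 1 + t₀ / (2 * π - t₀) := by positivity
    linarith

lemma pf_qf_of_nonneg {x : ℝ} (hx : 0 ≤ x) :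
    pf x = Real.cos (tf x) ∧ qf x = Real.sin (tf x) := by
  rcases eq_or_lt_of_le hx with h | h
  · subst h
    norm_num [pf, qf, tf]
  · simp [pf, qf, not_le.2 h]

/-- Cauchy–Schwarz on the circle with equality case. -/
lemma key_ineq {a b r c s : ℝ} (hr2 : r ^ 2 = a ^ 2 + b ^ 2) (hr0 : 0 < r)
    (hcs : c ^ 2 + s ^ 2 = 1) :
    a * c + b * s ≤ r ∧ (a * c + b * s = r → c = a / r ∧ s = b / r) := by
  constructor
  · nlinarith [sq_nonneg (a - r * c), sq_nonneg (b - r * s)]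
  · intro he
    have h2 : a - r * c = 0 := by nlinarith [sq_nonneg (a - r * c), sq_nonneg (b - r * s)]
    have h3 : b - r * s = 0 := by nlinarith [sq_nonneg (a - r * c), sq_nonneg (b - r * s)]
    constructor <;> field_simp <;> linarith

lemma exists_t0 {a b r : ℝ} (hr2 : r ^ 2 = a ^ 2 + b ^ 2) (hr0 : 0 < r) :
    ∃ t₀, 0 ≤ t₀ ∧ t₀ < 2 * π ∧ Real.cos t₀ = a / r ∧ Real.sin t₀ = b / r := by
  have hπ := Real.pi_pos
  have ha2 : a ^ 2 ≤ r ^ 2 := by nlinarith [sq_nonneg b]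
  have haup : a ≤ r := by nlinarith
  have halow : -r ≤ a := by nlinarith
  have h1 : -1 ≤ a / r := by rw [le_div_iff₀ hr0]; linarith
  have h2 : a / r ≤ 1 := by rw [div_le_one hr0]; linarith
  have hsq : 1 - (a / r) ^ 2 = (b / r) ^ 2 := by
    field_simp
    linarith
  by_cases hb : 0 ≤ b
  · refine ⟨Real.arccos (a / r), Real.arccos_nonneg _, ?_,
      Real.cos_arccos h1 h2, ?_⟩
    · linarith [Real.arccos_le_pi (a / r)]
    · rw [Real.sin_arccos, hsq, Real.sqrt_sq (div_nonneg hb hr0.le)]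
  · push_neg at hb
    have hb2 : 0 < b ^ 2 := by nlinarith
    have ha1 : a / r < 1 := by
      rw [div_lt_one hr0]
      nlinarith
    have harc : 0 < Real.arccos (a / r) := Real.arccos_pos.2 ha1
    refine ⟨2 * π - Real.arccos (a / r), ?_, by linarith, ?_, ?_⟩
    · linarith [Real.arccos_le_pi (a / r)]
    · rw [Real.cos_two_pi_sub, Real.cos_arccos h1 h2]
    · rw [Real.sin_two_pi_sub, Real.sin_arccos, hsq]
      have hbr : b / r < 0 := div_neg_of_neg_of_pos hb hr0
      rw [show (b / r) ^ 2 = (-(b / r)) ^ 2 by ring,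
        Real.sqrt_sq (by linarith : (0:ℝ) ≤ -(b / r))]
      ring

end Stmt5Aux

set_option maxHeartbeats 1000000 in
open Stmt5Aux in
/-- There exists a 2-dimensional linear subspace of `C(ℝ, ℝ)` all of
whose nonzero elements attain their maximum at exactly one point of `ℝ`. -/
theorem stmt_5 :
    ∃ V : Submodule ℝ C(ℝ, ℝ), Module.finrank ℝ V = 2 ∧
      ∀ f ∈ V, f ≠ 0 → ∃! x₀ : ℝ, ∀ x : ℝ, f x ≤ f x₀ := by
  have hπ := Real.pi_pos
  have hP0 : P 0 = 1 := by norm_num [P, pf]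
  have hQ0 : Q 0 = 0 := by norm_num [Q, qf]
  have htf13 : tf (1/3 : ℝ) = π / 2 := by
    rw [tf]
    rw [show |(1/3 : ℝ)| = 1/3 by norm_num]
    ring
  have h13 : ¬ ((1/3 : ℝ) ≤ 0) := by norm_num
  have hP13 : P (1/3 : ℝ) = 0 := by
    simp only [P, ContinuousMap.coe_mk, pf, if_neg h13, htf13, Real.cos_pi_div_two]
  have hQ13 : Q (1/3 : ℝ) = 1 := by
    simp only [Q, ContinuousMap.coe_mk, qf, if_neg h13, htf13, Real.sin_pi_div_two]
  refine ⟨Submodule.span ℝ {P, Q}, ?_, ?_⟩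
  · -- finrank = 2
    have hli : LinearIndependent ℝ ![P, Q] := by
      rw [LinearIndependent.pair_iff]
      intro s t hst
      have h0 := DFunLike.congr_fun hst 0
      have h13 := DFunLike.congr_fun hst (1/3 : ℝ)
      simp only [ContinuousMap.add_apply, ContinuousMap.smul_apply, ContinuousMap.zero_apply,
        smul_eq_mul, hP0, hQ0, hP13, hQ13] at h0 h13
      constructor <;> linarith
    have hset : ({P, Q} : Set C(ℝ, ℝ)) = Set.range ![P, Q] := by
      ext g
      simp [Matrix.range_cons, Matrix.range_empty]
      tauto
    rw [hset, finrank_span_eq_card hli]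
    simp
  · rintro f hf hf0
    rw [Submodule.mem_span_pair] at hf
    obtain ⟨a, b, rfl⟩ := hf
    -- the function is x ↦ a * pf x + b * qf x
    have hev : ∀ x : ℝ, (a • P + b • Q) x = a * pf x + b * qf x := by
      intro x
      simp [P, Q]
    have hab : a ≠ 0 ∨ b ≠ 0 := by
      by_contra h
      push_neg at h
      exact hf0 (by simp [h.1, h.2])
    have hab2 : 0 < a ^ 2 + b ^ 2 := by
      rcases hab with h | h
      · nlinarith [sq_nonneg b, abs_pos.2 h, sq_abs a]
      · nlinarith [sq_nonneg a, abs_pos.2 h, sq_abs b]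
    set r : ℝ := Real.sqrt (a ^ 2 + b ^ 2) with hrdef
    have hr0 : 0 < r := Real.sqrt_pos.2 hab2
    have hr2 : r ^ 2 = a ^ 2 + b ^ 2 := Real.sq_sqrt hab2.le
    obtain ⟨t₀, ht₀0, ht₀2, hcos, hsin⟩ := exists_t0 hr2 hr0
    set x₀ : ℝ := t₀ / (2 * π - t₀) with hx₀def
    obtain ⟨hx₀0, hx₀t⟩ := tf_x0 ht₀0 ht₀2
    have hfx₀ : (a • P + b • Q) x₀ = r := by
      obtain ⟨hp, hq⟩ := pf_qf_of_nonneg hx₀0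
      rw [hev, hp, hq, hx₀t, hcos, hsin,
        show a * (a / r) + b * (b / r) = (a ^ 2 + b ^ 2) / r by ring, ← hr2, sq,
        mul_div_assoc, div_self hr0.ne', mul_one]
    have hub : ∀ x : ℝ, (a • P + b • Q) x ≤ r ∧ ((a • P + b • Q) x = r → x = x₀) := by
      intro x
      rcases lt_or_ge x 0 with hx | hx
      · -- tail part: strictly below r
        have hxabs : 0 < |x| := abs_pos.2 hx.ne
        have hd : (1:ℝ) < 1 + |x| := by linarith
        have hval : (a • P + b • Q) x = a / (1 + |x|) := by
          rw [hev]
          simp [pf, qf, hx.le]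
          ring
        have hstrict : a / (1 + |x|) < r := by
          rcases le_or_gt a 0 with ha | ha
          · have : a / (1 + |x|) ≤ 0 := div_nonpos_iff.2 (Or.inr ⟨ha, by linarith⟩)
            linarith
          · have haler : a ≤ r := by nlinarith [sq_nonneg b]
            rw [div_lt_iff₀ (by linarith)]
            nlinarith
        rw [hval]
        exact ⟨hstrict.le, fun h => absurd h hstrict.ne⟩
      · -- circle part
        obtain ⟨hp, hq⟩ := pf_qf_of_nonneg hx
        set t : ℝ := tf x with htdef
        obtain ⟨ht0, ht2⟩ := tf_mem hx
        have hcs : Real.cos t ^ 2 + Real.sin t ^ 2 = 1 := Real.cos_sq_add_sin_sq t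
        have hval : (a • P + b • Q) x = a * Real.cos t + b * Real.sin t := by
          rw [hev, hp, hq]
        obtain ⟨hle, heq⟩ := key_ineq hr2 hr0 hcs
        rw [hval]
        refine ⟨hle, fun h => ?_⟩
        obtain ⟨hc, hs⟩ := heq h
        have hcos1 : Real.cos (t - t₀) = 1 := by
          rw [Real.cos_sub, hc, hs, hcos, hsin,
            show a / r * (a / r) + b / r * (b / r) = (a ^ 2 + b ^ 2) / (r * r) by ring,
            ← hr2, sq, div_self (mul_pos hr0 hr0).ne']
        have hteq : t - t₀ = 0 := by
          rw [Real.cos_eq_one_iff_of_lt_of_lt (by linarith) (by linarith)] at hcos1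
          exact hcos1
        have : t = t₀ := by linarith
        exact tf_injOn hx hx₀0 (by rw [← htdef, this, hx₀t])
    refine ⟨x₀, fun x => ?_, fun y hy => ?_⟩
    · rw [hfx₀]
      exact (hub x).1
    · have h1 : (a • P + b • Q) y ≤ r := (hub y).1
      have h2 : r ≤ (a • P + b • Q) y := by
        rw [← hfx₀]
        exact hy x₀
      exact (hub y).2 (le_antisymm h1 h2)
end
end

section
/- Let a < b be real numbers. There exists a 2-dimensional linear subspace V of the space C([a,b), ℝ) of continuous real-valued functions on the half-open interval [a,b) such that every nonzero f ∈ V attains its maximum at exactly one point of [a,b). -/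
open Real

/-- Polar decomposition with angle in `[0, 2π)`. -/
lemma exists_polar' (p q : ℝ) (h : ¬ (p = 0 ∧ q = 0)) :
    ∃ R φ : ℝ, 0 < R ∧ 0 ≤ φ ∧ φ < 2 * π ∧ p = R * Real.cos φ ∧ q = R * Real.sin φ := by
  set z : ℂ := ⟨p, q⟩ with hz
  have hz0 : z ≠ 0 := by
    intro h0
    rw [hz, Complex.ext_iff] at h0
    exact h ⟨h0.1, h0.2⟩
  have hR : 0 < ‖z‖ := norm_pos_iff.mpr hz0
  have hc : ‖z‖ * Real.cos (Complex.arg z) = p := Complex.norm_mul_cos_arg z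
  have hs : ‖z‖ * Real.sin (Complex.arg z) = q := Complex.norm_mul_sin_arg z
  have h1 : -π < Complex.arg z := Complex.neg_pi_lt_arg z
  have h2 : Complex.arg z ≤ π := Complex.arg_le_pi z
  have hπ := Real.pi_pos
  by_cases hneg : Complex.arg z < 0
  · refine ⟨‖z‖, Complex.arg z + 2 * π, hR, by linarith, by linarith, ?_, ?_⟩
    · rw [Real.cos_add_two_pi]; exact hc.symm
    · rw [Real.sin_add_two_pi]; exact hs.symm
  · exact ⟨‖z‖, Complex.arg z, hR, le_of_not_gt hneg, by linarith,
      hc.symm, hs.symm⟩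

/-- For real numbers `a < b`, there exists a 2-dimensional linear
subspace of `C([a,b), ℝ)` all of whose nonzero elements attain their maximum at
exactly one point of `[a,b)`. -/
theorem stmt_6 (a b : ℝ) (hab : a < b) :
    ∃ V : Submodule ℝ C(Set.Ico a b, ℝ), Module.finrank ℝ V = 2 ∧
      ∀ f ∈ V, f ≠ 0 → ∃! x₀ : Set.Ico a b, ∀ x : Set.Ico a b, f x ≤ f x₀ := by
  have hba : (0:ℝ) < b - a := sub_pos.mpr hab
  have hπ : (0:ℝ) < π := Real.pi_pos
  set T : Set.Ico a b → ℝ := fun x => 2 * π * ((x : ℝ) - a) / (b - a) with hTdef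
  have hTcont : Continuous T := by fun_prop
  have hT0 : ∀ x, 0 ≤ T x := by
    intro x
    have := x.2.1
    have : (0:ℝ) ≤ (x : ℝ) - a := by linarith
    positivity
  have hT2 : ∀ x, T x < 2 * π := by
    intro x
    have hx := x.2.2
    rw [hTdef]
    rw [div_lt_iff₀ hba]
    nlinarith
  have hTinj : Function.Injective T := by
    intro x y hxy
    apply Subtype.ext
    simp only [hTdef] at hxy
    rw [div_eq_div_iff hba.ne' hba.ne'] at hxy
    nlinarith [hxy, mul_pos hπ hba]
  have hTsurj : ∀ θ : ℝ, 0 ≤ θ → θ < 2 * π → ∃ x, T x = θ := by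
    intro θ h0 h2
    refine ⟨⟨a + θ * (b - a) / (2 * π), ?_, ?_⟩, ?_⟩
    · have : 0 ≤ θ * (b - a) / (2 * π) := by positivity
      linarith
    · have : θ * (b - a) / (2 * π) < b - a := by
        rw [div_lt_iff₀ (by positivity)]
        nlinarith
      linarith
    · show 2 * π * (a + θ * (b - a) / (2 * π) - a) / (b - a) = θ
      field_simp
      ring
  set c : C(Set.Ico a b, ℝ) := ⟨fun x => Real.cos (T x), by fun_prop⟩ with hc
  set s : C(Set.Ico a b, ℝ) := ⟨fun x => Real.sin (T x), by fun_prop⟩ with hs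
  -- evaluation points
  obtain ⟨x₀, hx₀⟩ := hTsurj 0 le_rfl (by positivity)
  obtain ⟨x₁, hx₁⟩ := hTsurj (π / 2) (by positivity) (by linarith)
  have hli : LinearIndependent ℝ ![c, s] := by
    rw [LinearIndependent.pair_iff]
    intro p q hpq
    have h0 := congrFun (congrArg DFunLike.coe hpq) x₀
    have h1 := congrFun (congrArg DFunLike.coe hpq) x₁
    simp [hc, hs, hx₀, hx₁] at h0 h1
    exact ⟨h0, h1⟩
  refine ⟨Submodule.span ℝ {c, s}, ?_, ?_⟩
  · have hrange : Set.range ![c, s] = {c, s} := by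
      ext g
      simp [Fin.exists_fin_two]
      tauto
    rw [← hrange, finrank_span_eq_card hli]
    simp
  · intro f hf hf0
    obtain ⟨p, q, hpq⟩ := Submodule.mem_span_pair.mp hf
    have hpq0 : ¬ (p = 0 ∧ q = 0) := by
      rintro ⟨rfl, rfl⟩
      simp at hpq
      exact hf0 hpq.symm
    obtain ⟨R, φ, hR, hφ0, hφ2, hp, hq⟩ := exists_polar' p q hpq0
    have hfval : ∀ x, f x = R * Real.cos (T x - φ) := by
      intro x
      have := congrFun (congrArg DFunLike.coe hpq) x
      simp [hc, hs] at this
      rw [← this, hp, hq, Real.cos_sub]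
      ring
    obtain ⟨y₀, hy₀⟩ := hTsurj φ hφ0 hφ2
    have hfy₀ : f y₀ = R := by rw [hfval, hy₀, sub_self, Real.cos_zero, mul_one]
    have hle : ∀ x, f x ≤ R := by
      intro x
      rw [hfval]
      calc R * Real.cos (T x - φ) ≤ R * 1 :=
            mul_le_mul_of_nonneg_left (Real.cos_le_one _) hR.le
        _ = R := mul_one R
    refine ⟨y₀, fun x => by rw [hfy₀]; exact hle x, ?_⟩
    intro y hy
    have hfy : f y = R := le_antisymm (hle y) (hfy₀ ▸ hy y₀)
    have hcos : Real.cos (T y - φ) = 1 := by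
      have := hfval y
      rw [hfy] at this
      nlinarith [this]
    have heq : T y - φ = 0 := by
      have b1 := hT0 y
      have b2 := hT2 y
      exact (Real.cos_eq_one_iff_of_lt_of_lt (by linarith) (by linarith)).mp hcos
    apply hTinj
    rw [hy₀]
    linarith
end

section
/- Let D be a metric space and let V be an n-dimensional linear space of continuous functions from D to ℝ such that every nonzero f ∈ V attains its maximum at exactly one point of D. Let f₁, …, fₙ be a basis of V, let F : D → ℝⁿ be defined by F(y) = (f₁(y), …, fₙ(y)), let D′ ⊆ D be the set of points of maximum of the nonzero functions in V, and let X = F(D′). Then for every v ∈ S^{n-1}, the function g_v : X → ℝ, g_v(x) = ⟨x, v⟩, attains its maximum at exactly one point of X. -/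
open scoped RealInnerProductSpace

/-- Let `D` be a metric space, `f₁, …, fₙ` linearly independent
continuous functions spanning a subspace `V` of `C(D, ℝ)` all of whose nonzero
elements attain their maximum at exactly one point, `F : D → ℝⁿ` the map
`F y = (f₁ y, …, fₙ y)`, `D'` the set of points of maximum of nonzero members of
`V`, and `X = F(D')`. Then for every `v ∈ S^{n-1}` the map `x ↦ ⟨x, v⟩` attains its
maximum at exactly one point of `X`. -/
theorem stmt_8 (D : Type*) [MetricSpace D] (n : ℕ)
    (f : Fin n → C(D, ℝ)) (hli : LinearIndependent ℝ f)
    (V : Submodule ℝ C(D, ℝ)) (hV : V = Submodule.span ℝ (Set.range f))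
    (hmax : ∀ g ∈ V, g ≠ 0 → ∃! x₀ : D, ∀ x : D, g x ≤ g x₀)
    (F : D → EuclideanSpace ℝ (Fin n)) (hF : ∀ (y : D) (i : Fin n), F y i = f i y)
    (D' : Set D) (hD' : D' = {d : D | ∃ g ∈ V, g ≠ 0 ∧ ∀ x : D, g x ≤ g d})
    (X : Set (EuclideanSpace ℝ (Fin n))) (hX : X = F '' D') :
    ∀ v ∈ Metric.sphere (0 : EuclideanSpace ℝ (Fin n)) 1,
      ∃! x₀, x₀ ∈ X ∧ ∀ x ∈ X, ⟪x, v⟫ ≤ ⟪x₀, v⟫ := by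
  intro v hv
  set g : C(D, ℝ) := ∑ i, v i • f i with hg
  have hgV : g ∈ V := by
    rw [hV]
    exact Submodule.sum_mem _ fun i _ =>
      Submodule.smul_mem _ _ (Submodule.subset_span ⟨i, rfl⟩)
  have hvne : v ≠ 0 := by
    intro h
    rw [h] at hv
    simp at hv
  have hgne : g ≠ 0 := by
    intro h
    apply hvne
    have := linearIndependent_iff'.mp hli Finset.univ v (by simpa [hg] using h)
    ext i
    exact this i (Finset.mem_univ i)
  -- inner product formula
  have key : ∀ y : D, ⟪F y, v⟫ = g y := by
    intro y
    rw [PiLp.inner_apply]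
    simp only [hg, ContinuousMap.coe_sum, ContinuousMap.coe_smul, Finset.sum_apply,
      Pi.smul_apply, smul_eq_mul, RCLike.inner_apply, conj_trivial, hF]
  obtain ⟨d₀, hd₀, hd₀u⟩ := hmax g hgV hgne
  have hd₀D' : d₀ ∈ D' := by
    rw [hD']; exact ⟨g, hgV, hgne, hd₀⟩
  refine ⟨F d₀, ⟨by rw [hX]; exact ⟨d₀, hd₀D', rfl⟩, ?_⟩, ?_⟩
  · rintro x hx
    rw [hX] at hx
    obtain ⟨d, -, rfl⟩ := hx
    rw [key, key]
    exact hd₀ d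
  · rintro x₁ ⟨hx₁X, hx₁max⟩
    rw [hX] at hx₁X
    obtain ⟨d₁, -, rfl⟩ := hx₁X
    have h1 : g d₀ ≤ g d₁ := by
      rw [← key, ← key]
      exact hx₁max (F d₀) (by rw [hX]; exact ⟨d₀, hd₀D', rfl⟩)
    have : d₁ = d₀ := hd₀u d₁ (fun x => le_trans (hd₀ x) h1)
    rw [this]
end

section
/- Let D be a metric space and let V be an n-dimensional linear space of continuous functions from D to ℝ such that every nonzero f ∈ V attains its maximum at exactly one point of D. Let f₁, …, fₙ be a basis of V, let F : D → ℝⁿ be defined by F(y) = (f₁(y), …, fₙ(y)), let D′ ⊆ D be the set of points of maximum of the nonzero functions in V, and let X = F(D′). Then for every x ∈ X there exists v ∈ S^{n-1} such that x is the unique point of maximum of the function g_v : X → ℝ, g_v(z) = ⟨z, v⟩. -/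
open scoped RealInnerProductSpace

/-- With the setting of Statement 8 (metric space `D`, basis
`f₁, …, fₙ` of `V`, `F y = (f₁ y, …, fₙ y)`, `D'` the points of maximum, and
`X = F(D')`), for every `x ∈ X` there is `v ∈ S^{n-1}` such that `x` is the unique
point of maximum on `X` of the map `z ↦ ⟨z, v⟩`. -/
theorem stmt_9 (D : Type*) [MetricSpace D] (n : ℕ)
    (f : Fin n → C(D, ℝ)) (hli : LinearIndependent ℝ f)
    (V : Submodule ℝ C(D, ℝ)) (hV : V = Submodule.span ℝ (Set.range f))
    (hmax : ∀ g ∈ V, g ≠ 0 → ∃! x₀ : D, ∀ x : D, g x ≤ g x₀)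
    (F : D → EuclideanSpace ℝ (Fin n)) (hF : ∀ (y : D) (i : Fin n), F y i = f i y)
    (D' : Set D) (hD' : D' = {d : D | ∃ g ∈ V, g ≠ 0 ∧ ∀ x : D, g x ≤ g d})
    (X : Set (EuclideanSpace ℝ (Fin n))) (hX : X = F '' D') :
    ∀ x ∈ X, ∃ v ∈ Metric.sphere (0 : EuclideanSpace ℝ (Fin n)) 1,
      (∀ z ∈ X, ⟪z, v⟫ ≤ ⟪x, v⟫) ∧
      ∀ z ∈ X, (∀ w ∈ X, ⟪w, v⟫ ≤ ⟪z, v⟫) → z = x := by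
  intro x hx
  rw [hX] at hx
  obtain ⟨d, hd, rfl⟩ := hx
  have hdmem := hd
  rw [hD'] at hd
  obtain ⟨g, hgV, hg0, hmaxd⟩ := hd
  rw [hV] at hgV
  obtain ⟨c, hc⟩ := (Submodule.mem_span_range_iff_exists_fun ℝ).mp hgV
  set w : EuclideanSpace ℝ (Fin n) := (WithLp.equiv 2 (Fin n → ℝ)).symm c with hw
  have hc0 : c ≠ 0 := by
    intro h
    apply hg0
    rw [← hc, h]
    simp
  have hw0 : w ≠ 0 := by
    simpa [hw, WithLp.equiv] using hc0
  have hnw : ‖w‖ ≠ 0 := norm_ne_zero_iff.mpr hw0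
  have hwc : ∀ i, w i = c i := fun i => rfl
  have key : ∀ y : D, ⟪F y, ‖w‖⁻¹ • w⟫ = ‖w‖⁻¹ * g y := by
    intro y
    rw [real_inner_smul_right]
    congr 1
    have h2 : ⟪F y, w⟫ = ∑ i, f i y * c i := by
      simp [PiLp.inner_apply, hF, hwc, mul_comm]
    rw [h2, ← hc]
    simp [mul_comm]
  refine ⟨‖w‖⁻¹ • w, ?_, ?_, ?_⟩
  · simp [norm_smul, inv_mul_cancel₀ hnw]
  · intro z hz
    rw [hX] at hz
    obtain ⟨y, hy, rfl⟩ := hz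
    rw [key, key]
    exact mul_le_mul_of_nonneg_left (hmaxd y) (by positivity)
  · intro z hz hzmax
    rw [hX] at hz
    obtain ⟨y, hy, rfl⟩ := hz
    have h1 : ⟪F d, ‖w‖⁻¹ • w⟫ ≤ ⟪F y, ‖w‖⁻¹ • w⟫ :=
      hzmax (F d) (by rw [hX]; exact ⟨d, hdmem, rfl⟩)
    rw [key, key] at h1
    have hpos : (0:ℝ) < ‖w‖⁻¹ := inv_pos.mpr (norm_pos_iff.mpr hw0)
    have hgd : g d ≤ g y := le_of_mul_le_mul_left h1 hpos
    have hymax : ∀ x : D, g x ≤ g y := fun x => (hmaxd x).trans hgd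
    obtain ⟨x₀, hx₀, huniq⟩ := hmax g (hV ▸ hgV) hg0
    rw [huniq y hymax, huniq d hmaxd]
end

section
/- Let D be a metric space and let V be an n-dimensional linear space of continuous functions from D to ℝ such that every nonzero f ∈ V attains its maximum at exactly one point of D. Let f₁, …, fₙ be a basis of V, let F : D → ℝⁿ be defined by F(y) = (f₁(y), …, fₙ(y)), let D′ ⊆ D be the set of points of maximum of the nonzero functions in V, and let X = F(D′) ⊆ ℝⁿ. Then the restriction F|_{D′} : D′ → X is a continuous bijection, where D′ carries the metric induced from D and X carries the Euclidean metric of ℝⁿ. -/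
/-- With the setting of Statement 8 (metric space `D`, basis
`f₁, …, fₙ` of `V`, `F y = (f₁ y, …, fₙ y)`, `D'` the points of maximum, and
`X = F(D')`), the restriction of `F` to `D'` is a continuous bijection onto `X`,
i.e. `F` is continuous on `D'` and injective on `D'` (its image being `X`). -/
theorem stmt_10 (D : Type*) [MetricSpace D] (n : ℕ)
    (f : Fin n → C(D, ℝ)) (hli : LinearIndependent ℝ f)
    (V : Submodule ℝ C(D, ℝ)) (hV : V = Submodule.span ℝ (Set.range f))
    (hmax : ∀ g ∈ V, g ≠ 0 → ∃! x₀ : D, ∀ x : D, g x ≤ g x₀)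
    (F : D → EuclideanSpace ℝ (Fin n)) (hF : ∀ (y : D) (i : Fin n), F y i = f i y)
    (D' : Set D) (hD' : D' = {d : D | ∃ g ∈ V, g ≠ 0 ∧ ∀ x : D, g x ≤ g d})
    (X : Set (EuclideanSpace ℝ (Fin n))) (hX : X = F '' D') :
    ContinuousOn F D' ∧ Set.InjOn F D' ∧ F '' D' = X := by
  refine ⟨?_, ?_, hX.symm⟩
  · have hcont : Continuous F := by
      have : Continuous fun y : D => (fun i => f i y : Fin n → ℝ) :=
        continuous_pi fun i => (f i).continuous
      have heq : F = (WithLp.equiv 2 (Fin n → ℝ)).symm ∘ fun y => (fun i => f i y) := by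
        funext y; ext i; simp [hF]
      rw [heq]
      exact ((PiLp.continuous_toLp 2 (fun _ : Fin n => ℝ)).comp this)
    exact hcont.continuousOn
  · intro a ha b hb hab
    by_contra hne
    -- every g ∈ V agrees on a and b
    have key : ∀ g ∈ V, (g : C(D, ℝ)) a = g b := by
      intro g hg
      rw [hV] at hg
      induction hg using Submodule.span_induction with
      | mem g hg =>
          obtain ⟨i, rfl⟩ := hg
          have := congrFun (congrArg (fun v : EuclideanSpace ℝ (Fin n) => (v : Fin n → ℝ)) hab) i
          simpa [hF] using (by rw [← hF a i, ← hF b i, hab])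
      | zero => simp
      | add g h _ _ hga hha => simp [hga, hha]
      | smul c g _ hga => simp [hga]
    rw [hD'] at ha
    obtain ⟨g, hgV, hg0, hga⟩ := ha
    obtain ⟨x₀, hx₀, huniq⟩ := hmax g hgV hg0
    have h1 : x₀ = a := (huniq a hga).symm
    have hgb : ∀ x, g x ≤ g b := by
      intro x
      calc g x ≤ g a := hga x
        _ = g b := key g hgV
    have h2 : x₀ = b := (huniq b hgb).symm
    exact hne (h1 ▸ h2)
end

section
/- Let n ≥ 2 and let X ⊆ ℝⁿ be a set with more than one point such that: (1) for every v ∈ S^{n-1}, the function g_v : X → ℝ, g_v(x) = ⟨x, v⟩, attains its maximum at exactly one point x_v ∈ X; and (2) for every x ∈ X there exists v ∈ S^{n-1} such that x is the unique point of maximum of g_v. Let f : S^{n-1} → X be the map f(v) = x_v. Then for every compact subset K of ℝⁿ with K ⊆ X, the preimage f⁻¹(K) ⊆ S^{n-1} is a compact subset of ℝⁿ. -/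
open scoped RealInnerProductSpace

/-- Let `n ≥ 2` and let `X ⊆ ℝⁿ` have more than one point, such that
for each `v ∈ S^{n-1}` the map `x ↦ ⟨x, v⟩` attains its maximum at exactly one point
of `X`, and each `x ∈ X` is the unique point of maximum of some such map. If
`f : S^{n-1} → X` sends `v` to the point of maximum of `x ↦ ⟨x, v⟩`, then for every
compact `K ⊆ X` the preimage `f⁻¹(K) ⊆ S^{n-1}` is compact. -/
theorem stmt_11 (n : ℕ) (hn : 2 ≤ n) (X : Set (EuclideanSpace ℝ (Fin n)))
    (hXnt : Set.Nontrivial X)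
    (h1 : ∀ v ∈ Metric.sphere (0 : EuclideanSpace ℝ (Fin n)) 1,
      ∃! x₀, x₀ ∈ X ∧ ∀ x ∈ X, ⟪x, v⟫ ≤ ⟪x₀, v⟫)
    (h2 : ∀ x ∈ X, ∃ v ∈ Metric.sphere (0 : EuclideanSpace ℝ (Fin n)) 1,
      (∀ z ∈ X, ⟪z, v⟫ ≤ ⟪x, v⟫) ∧ ∀ z ∈ X, (∀ w ∈ X, ⟪w, v⟫ ≤ ⟪z, v⟫) → z = x)
    (f : EuclideanSpace ℝ (Fin n) → EuclideanSpace ℝ (Fin n))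
    (hf : ∀ v ∈ Metric.sphere (0 : EuclideanSpace ℝ (Fin n)) 1,
      f v ∈ X ∧ ∀ x ∈ X, ⟪x, v⟫ ≤ ⟪f v, v⟫)
    (K : Set (EuclideanSpace ℝ (Fin n))) (hK : IsCompact K) (hKX : K ⊆ X) :
    IsCompact (Metric.sphere (0 : EuclideanSpace ℝ (Fin n)) 1 ∩ f ⁻¹' K) := by
  have hsph : IsCompact (Metric.sphere (0 : EuclideanSpace ℝ (Fin n)) 1) :=
    isCompact_sphere _ _
  apply hsph.of_isClosed_subset _ Set.inter_subset_left
  apply IsSeqClosed.isClosed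
  intro u v hu huv
  have hv : v ∈ Metric.sphere (0 : EuclideanSpace ℝ (Fin n)) 1 :=
    Metric.isClosed_sphere.mem_of_tendsto huv (Filter.Eventually.of_forall fun k => (hu k).1)
  have hfuK : ∀ k, f (u k) ∈ K := fun k => (hu k).2
  obtain ⟨x, hxK, φ, hφ, hlim⟩ := hK.tendsto_subseq hfuK
  have huφ : Filter.Tendsto (u ∘ φ) Filter.atTop (nhds v) := huv.comp hφ.tendsto_atTop
  have hxmax : ∀ z ∈ X, ⟪z, v⟫ ≤ ⟪x, v⟫ := by
    intro z hz
    have hle : ∀ k, ⟪z, u (φ k)⟫ ≤ ⟪f (u (φ k)), u (φ k)⟫ := fun k =>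
      (hf (u (φ k)) (hu (φ k)).1).2 z hz
    have h1' : Filter.Tendsto (fun k => ⟪z, u (φ k)⟫) Filter.atTop (nhds ⟪z, v⟫) :=
      (Continuous.inner continuous_const continuous_id).continuousAt.tendsto.comp huφ
    have h2' : Filter.Tendsto (fun k => ⟪f (u (φ k)), u (φ k)⟫) Filter.atTop
        (nhds ⟪x, v⟫) :=
      (Continuous.inner continuous_fst continuous_snd).continuousAt.tendsto.comp
        (hlim.prodMk_nhds huφ)
    exact le_of_tendsto_of_tendsto' h1' h2' hle
  obtain ⟨x₀, hx₀, huniq⟩ := h1 v hv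
  have e1 : f v = x₀ := huniq (f v) ⟨(hf v hv).1, (hf v hv).2⟩
  have e2 : x = x₀ := huniq x ⟨hKX hxK, hxmax⟩
  exact ⟨hv, by rw [Set.mem_preimage, e1, ← e2]; exact hxK⟩
end

section
/- Let n ≥ 2 and let X ⊆ ℝⁿ be a set with more than one point such that: (1) for every v ∈ S^{n-1}, the function g_v : X → ℝ, g_v(x) = ⟨x, v⟩, attains its maximum at exactly one point x_v ∈ X; and (2) for every x ∈ X there exists v ∈ S^{n-1} such that x is the unique point of maximum of g_v. Let f : S^{n-1} → X be the map f(v) = x_v, where S^{n-1} and X carry the Euclidean metric of ℝⁿ. Then f is continuous if and only if X is compact. -/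
open scoped RealInnerProductSpace

/-- With `X` and `f` as in Statement 11 (`X ⊆ ℝⁿ` with more than one
point, each `v ∈ S^{n-1}` giving a unique point of maximum `f v ∈ X` of
`x ↦ ⟨x, v⟩`, and each point of `X` arising this way), the map `f` is continuous on
`S^{n-1}` if and only if `X` is compact. -/
theorem stmt_12 (n : ℕ) (hn : 2 ≤ n) (X : Set (EuclideanSpace ℝ (Fin n)))
    (hXnt : Set.Nontrivial X)
    (h1 : ∀ v ∈ Metric.sphere (0 : EuclideanSpace ℝ (Fin n)) 1,
      ∃! x₀, x₀ ∈ X ∧ ∀ x ∈ X, ⟪x, v⟫ ≤ ⟪x₀, v⟫)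
    (h2 : ∀ x ∈ X, ∃ v ∈ Metric.sphere (0 : EuclideanSpace ℝ (Fin n)) 1,
      (∀ z ∈ X, ⟪z, v⟫ ≤ ⟪x, v⟫) ∧ ∀ z ∈ X, (∀ w ∈ X, ⟪w, v⟫ ≤ ⟪z, v⟫) → z = x)
    (f : EuclideanSpace ℝ (Fin n) → EuclideanSpace ℝ (Fin n))
    (hf : ∀ v ∈ Metric.sphere (0 : EuclideanSpace ℝ (Fin n)) 1,
      f v ∈ X ∧ ∀ x ∈ X, ⟪x, v⟫ ≤ ⟪f v, v⟫) :
    ContinuousOn f (Metric.sphere (0 : EuclideanSpace ℝ (Fin n)) 1) ↔ IsCompact X := by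
  constructor
  · intro hcont
    have hXeq : X = f '' (Metric.sphere (0 : EuclideanSpace ℝ (Fin n)) 1) := by
      apply Set.Subset.antisymm
      · intro x hx
        obtain ⟨v, hv, hmax, huniq⟩ := h2 x hx
        exact ⟨v, hv, huniq (f v) (hf v hv).1 (hf v hv).2⟩
      · rintro x ⟨v, hv, rfl⟩
        exact (hf v hv).1
    rw [hXeq]
    exact (isCompact_sphere _ _).image_of_continuousOn hcont
  · intro hX v hv
    rw [ContinuousWithinAt, Filter.tendsto_iff_ultrafilter]
    intro g hg
    have hg' : (g : Filter _) ≤ nhds v := hg.trans nhdsWithin_le_nhds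
    have hsph : Metric.sphere (0 : EuclideanSpace ℝ (Fin n)) 1 ∈ (g : Filter _) :=
      hg self_mem_nhdsWithin
    have hmem : X ∈ Ultrafilter.map f g :=
      Filter.mem_map.2 (Filter.mem_of_superset hsph (fun w hw => (hf w hw).1))
    obtain ⟨x, hxX, hxle⟩ := hX.ultrafilter_le_nhds (Ultrafilter.map f g)
      (Filter.le_principal_iff.2 hmem)
    have hfx : Filter.Tendsto f (g : Filter _) (nhds x) := hxle
    have hxmax : ∀ y ∈ X, ⟪y, v⟫ ≤ ⟪x, v⟫ := by
      intro y hy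
      have ht1 : Filter.Tendsto (fun w => ⟪y, w⟫) (g : Filter _) (nhds ⟪y, v⟫) :=
        Filter.Tendsto.inner tendsto_const_nhds hg'
      have ht2 : Filter.Tendsto (fun w => ⟪f w, w⟫) (g : Filter _) (nhds ⟪x, v⟫) :=
        Filter.Tendsto.inner hfx hg'
      refine le_of_tendsto_of_tendsto ht1 ht2 ?_
      exact Filter.eventually_of_mem hsph (fun w hw => (hf w hw).2 y hy)
    obtain ⟨x₀, hx₀, huniq⟩ := h1 v hv
    have hx1 : x = x₀ := huniq x ⟨hxX, hxmax⟩
    have hx2 : f v = x₀ := huniq (f v) ⟨(hf v hv).1, (hf v hv).2⟩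
    rw [hx1, ← hx2] at hfx
    exact hfx
end

section
/- Let n ≥ 2 and m ≥ 1 be positive integers with m ≥ n. Then there exists a compact subset K of ℝᵐ and an n-dimensional linear subspace V of C(K, ℝ) such that every nonzero f ∈ V attains its maximum at exactly one point of K. (One may take K to be the unit sphere S^{n-1}, embedded in ℝᵐ.) -/
open scoped RealInnerProductSpace

/-- For positive integers `n ≥ 2` and `m ≥ 1` with `m ≥ n`, there is a
compact subset `K` of `ℝᵐ` and an `n`-dimensional linear subspace of `C(K, ℝ)` all
of whose nonzero elements attain their maximum at exactly one point of `K`. -/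
theorem stmt_14 (n m : ℕ) (hn : 2 ≤ n) (hm : 1 ≤ m) (hmn : n ≤ m) :
    ∃ K : Set (EuclideanSpace ℝ (Fin m)), IsCompact K ∧
      ∃ V : Submodule ℝ C(K, ℝ), Module.finrank ℝ V = n ∧
        ∀ f ∈ V, f ≠ 0 → ∃! x₀ : K, ∀ x : K, f x ≤ f x₀ := by
  set E := EuclideanSpace ℝ (Fin m)
  -- an n-dimensional subspace W of E
  let b := PiLp.basisFun 2 ℝ (Fin m)
  have hli : LinearIndependent ℝ (b ∘ Fin.castLE hmn) :=
    b.linearIndependent.comp _ (Fin.castLE_injective hmn)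
  set W : Submodule ℝ E := Submodule.span ℝ (Set.range (b ∘ Fin.castLE hmn)) with hW
  have hWrank : Module.finrank ℝ W = n := by
    rw [hW, finrank_span_eq_card hli, Fintype.card_fin]
  -- K is the unit sphere of W
  set K : Set E := (W : Set E) ∩ Metric.sphere 0 1 with hK
  have hKmem : ∀ x : E, x ∈ K ↔ x ∈ W ∧ ‖x‖ = 1 := by
    intro x
    simp [hK, mem_sphere_iff_norm]
  have hKcompact : IsCompact K := by
    have : IsClosed (W : Set E) := Submodule.closed_of_finiteDimensional W
    exact (isCompact_sphere 0 1).inter_left this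
  refine ⟨K, hKcompact, ?_⟩
  -- the map sending a ∈ W to the function x ↦ ⟪a, x⟫ on K
  let T : W →ₗ[ℝ] C(K, ℝ) :=
    { toFun := fun a => ⟨fun x => ⟪(a : E), (x : E)⟫,
        (Continuous.inner continuous_const continuous_subtype_val)⟩
      map_add' := fun a b => by ext x; simp [inner_add_left]
      map_smul' := fun c a => by ext x; simp [inner_smul_left] }
  -- the canonical point a/‖a‖ of K for a ≠ 0 in W
  have hpt : ∀ a : W, (a : E) ≠ 0 → ((‖(a : E)‖⁻¹ • a : W) : E) ∈ K := by
    intro a ha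
    rw [hKmem]
    refine ⟨(‖(a : E)‖⁻¹ • a : W).2, ?_⟩
    have hna : ‖(a : E)‖ ≠ 0 := norm_ne_zero_iff.2 ha
    simp [norm_smul, abs_of_nonneg (inv_nonneg.2 (norm_nonneg _)), inv_mul_cancel₀ hna]
    rw [abs_of_nonneg (norm_nonneg _)]; exact inv_mul_cancel₀ hna
  have hTapp : ∀ (a : W) (x : K), T a x = ⟪(a : E), (x : E)⟫ := fun _ _ => rfl
  have hinner : ∀ a : W, (a : E) ≠ 0 →
      ⟪(a : E), ((‖(a : E)‖⁻¹ • a : W) : E)⟫ = ‖(a : E)‖ := by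
    intro a ha
    have hna : ‖(a : E)‖ ≠ 0 := norm_ne_zero_iff.2 ha
    have hco : ((‖(a : E)‖⁻¹ • a : W) : E) = ‖(a : E)‖⁻¹ • (a : E) := rfl
    rw [hco, real_inner_smul_right, real_inner_self_eq_norm_sq, sq, ← mul_assoc,
      inv_mul_cancel₀ hna, one_mul]
  have hTinj : Function.Injective T := by
    rw [injective_iff_map_eq_zero]
    intro a ha
    by_contra h
    have ha' : (a : E) ≠ 0 := fun h' => h (Subtype.ext h')
    have hx := hpt a ha'
    have h0 := ContinuousMap.congr_fun ha ⟨_, hx⟩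
    rw [hTapp] at h0
    have hna : ‖(a : E)‖ ≠ 0 := norm_ne_zero_iff.2 ha'
    exact hna (by rw [← hinner a ha']; simpa using h0)
  refine ⟨LinearMap.range T, ?_, ?_⟩
  · rw [LinearMap.finrank_range_of_inj hTinj, hWrank]
  · rintro f hf hf0
    obtain ⟨a, rfl⟩ := hf
    have ha' : (a : E) ≠ 0 := by
      intro h
      exact hf0 (by rw [show a = 0 from Subtype.ext h]; exact map_zero T)
    have hna : ‖(a : E)‖ ≠ 0 := norm_ne_zero_iff.2 ha'
    have hnapos : 0 < ‖(a : E)‖ := norm_pos_iff.2 ha'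
    set x₀ : K := ⟨_, hpt a ha'⟩ with hx₀
    have hfx₀ : T a x₀ = ‖(a : E)‖ := by
      rw [hTapp]; exact hinner a ha' 
    have hmax : ∀ x : K, T a x ≤ T a x₀ := by
      intro x
      have hx1 : ‖(x : E)‖ = 1 := ((hKmem x).1 x.2).2
      calc T a x ≤ ‖(a : E)‖ * ‖(x : E)‖ := by
            rw [hTapp]; exact real_inner_le_norm _ _
        _ = ‖(a : E)‖ := by rw [hx1, mul_one]
        _ = T a x₀ := hfx₀.symm
    refine ⟨x₀, hmax, ?_⟩
    intro y hy
    have hy1 : ‖(y : E)‖ = 1 := ((hKmem y).1 y.2).2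
    have h1 : T a y = ‖(a : E)‖ := by
      have h2 : T a y ≤ ‖(a : E)‖ * ‖(y : E)‖ := by
        rw [hTapp]; exact real_inner_le_norm _ _
      have h3 : T a x₀ ≤ T a y := hy x₀
      rw [hfx₀] at h3
      rw [hy1, mul_one] at h2
      linarith
    have heq : ⟪(a : E), (y : E)⟫ = ‖(a : E)‖ * ‖(y : E)‖ := by
      rw [hy1, mul_one, ← hTapp]; exact h1
    rw [inner_eq_norm_mul_iff_real] at heq
    rw [hy1, one_smul] at heq
    have h2 : (‖(a : E)‖⁻¹ : ℝ) • (a : E) = (y : E) := by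
      nth_rewrite 2 [heq]
      rw [smul_smul, inv_mul_cancel₀ hna, one_smul]
    exact Subtype.ext h2.symm
end

section
/- Let a < b be real numbers. There is no 2-dimensional linear subspace V of C([a,b], ℝ) such that every nonzero f ∈ V attains its maximum at exactly one point of [a,b]. -/
open scoped Topology

/-- For real numbers `a < b`, there is no 2-dimensional linear
subspace of `C([a,b], ℝ)` all of whose nonzero elements attain their maximum at
exactly one point of `[a,b]`. -/
theorem stmt_15 (a b : ℝ) (hab : a < b) :
    ¬ ∃ V : Submodule ℝ C(Set.Icc a b, ℝ), Module.finrank ℝ V = 2 ∧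
      ∀ f ∈ V, f ≠ 0 → ∃! x₀ : Set.Icc a b, ∀ x : Set.Icc a b, f x ≤ f x₀ := by
  rintro ⟨V, hdim, hmax⟩
  obtain ⟨ι, hι⟩ : ∃ f : Fin 2 → V, LinearIndependent ℝ f :=
    exists_linearIndependent_of_le_finrank (le_of_eq hdim.symm)
  set fc : C(Set.Icc a b, ℝ) := (ι 0 : C(Set.Icc a b, ℝ)) with hfc
  set gc : C(Set.Icc a b, ℝ) := (ι 1 : C(Set.Icc a b, ℝ)) with hgc
  set F : ℝ → C(Set.Icc a b, ℝ) := fun t => Real.cos t • fc + Real.sin t • gc with hF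
  -- each F t is a nonzero element of V
  have hFmem : ∀ t, F t ∈ V := fun t =>
    V.add_mem (V.smul_mem _ (ι 0).2) (V.smul_mem _ (ι 1).2)
  have hFne : ∀ t, F t ≠ 0 := by
    intro t h0
    have hv : Real.cos t • ι 0 + Real.sin t • ι 1 = (0 : V) := by
      apply Subtype.ext
      simpa using h0
    have := Fintype.linearIndependent_iff.mp hι ![Real.cos t, Real.sin t]
      (by simpa [Fin.sum_univ_two] using hv)
    have h1 := this 0
    have h2 := this 1
    simp at h1 h2
    nlinarith [Real.sin_sq_add_cos_sq t]
  -- the maximizer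
  have hP : ∀ t : ℝ, ∃! x₀ : Set.Icc a b, ∀ x : Set.Icc a b, F t x ≤ F t x₀ :=
    fun t => hmax (F t) (hFmem t) (hFne t)
  choose x hx using fun t => (hP t).exists
  have huniq : ∀ t (y : Set.Icc a b), (∀ z, F t z ≤ F t y) → y = x t :=
    fun t y hy => (hP t).unique hy (hx t)
  -- F is continuous
  have hFcont : Continuous F := by
    apply Continuous.add
    · exact Real.continuous_cos.smul continuous_const
    · exact Real.continuous_sin.smul continuous_const
  -- continuity of the maximizer map
  have hxcont : Continuous x := by
    rw [continuous_iff_continuousAt]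
    intro t
    rw [ContinuousAt, tendsto_nhds]
    intro U hU hxtU
    by_cases hK : (Uᶜ : Set (Set.Icc a b)).Nonempty
    · obtain ⟨y0, hy0K, hy0max⟩ := (hU.isClosed_compl.isCompact).exists_isMaxOn hK
        (F t).continuous.continuousOn
      have hy0ne : y0 ≠ x t := fun h => (h ▸ hy0K) hxtU
      have hstrict : F t y0 < F t (x t) := by
        rcases lt_or_eq_of_le (hx t y0) with h | h
        · exact h
        · exact absurd (huniq t y0 (fun z => h ▸ hx t z)) hy0ne
      set δ := F t (x t) - F t y0 with hδ
      have hδpos : 0 < δ := by simp [hδ]; linarith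
      have hev : ∀ᶠ s in 𝓝 t, dist (F s) (F t) < δ / 3 :=
        Metric.tendsto_nhds.mp (hFcont.tendsto t) (δ / 3) (by linarith)
      filter_upwards [hev] with s hs
      by_contra hxsU
      have hxsK : x s ∈ (Uᶜ : Set (Set.Icc a b)) := hxsU
      have h1 : dist (F s (x s)) (F t (x s)) < δ / 3 :=
        lt_of_le_of_lt (ContinuousMap.dist_apply_le_dist _) hs
      have h2 : dist (F s (x t)) (F t (x t)) < δ / 3 :=
        lt_of_le_of_lt (ContinuousMap.dist_apply_le_dist _) hs
      have h3 : F t (x s) ≤ F t y0 := hy0max hxsK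
      have h4 : F s (x t) ≤ F s (x s) := hx s (x t)
      rw [Real.dist_eq, abs_sub_lt_iff] at h1 h2
      linarith [h1.1, h1.2, h2.1, h2.2]
    · push_neg at hK
      have hU2 : U = Set.univ := Set.compl_empty_iff.mp hK
      filter_upwards with s
      rw [hU2]; trivial
  -- F (t + π) = - F t
  have hFpi : ∀ t, F (t + Real.pi) = -(F t) := by
    intro t
    simp only [hF, Real.cos_add_pi, Real.sin_add_pi]
    ext z
    simp
    ring
  -- x (t + π) is the minimizer of F t; x t ≠ x (t + π)
  have hne : ∀ t, (x t : ℝ) ≠ (x (t + Real.pi) : ℝ) := by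
    intro t heq
    have heq' : x t = x (t + Real.pi) := Subtype.ext heq
    have hmin : ∀ z, F t (x t) ≤ F t z := by
      intro z
      have := hx (t + Real.pi) z
      rw [hFpi t, ← heq'] at this
      simpa using this
    -- F t is constant, so every point is a maximizer
    have hconst : ∀ z, F t z = F t (x t) := fun z => le_antisymm (hx t z) (hmin z)
    have hA : (⟨a, Set.left_mem_Icc.mpr hab.le⟩ : Set.Icc a b) = x t :=
      huniq t _ (fun z => le_trans (hx t z) (hconst _).ge)
    have hB : (⟨b, Set.right_mem_Icc.mpr hab.le⟩ : Set.Icc a b) = x t :=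
      huniq t _ (fun z => le_trans (hx t z) (hconst _).ge)
    have : a = b := congrArg Subtype.val (hA.trans hB.symm)
    exact absurd this hab.ne
  -- x (t + 2π) = x t
  have hper : ∀ t, x (t + 2 * Real.pi) = x t := by
    intro t
    have hFF : F (t + 2 * Real.pi) = F t := by
      simp only [hF]
      rw [show t + 2 * Real.pi = t + Real.pi + Real.pi by ring,
        Real.cos_add_pi, Real.cos_add_pi, Real.sin_add_pi, Real.sin_add_pi]
      ring_nf
    exact huniq t (x (t + 2 * Real.pi)) (by rw [← hFF]; exact hx _)
  -- the sign-changing function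
  set φ : ℝ → ℝ := fun t => (x t : ℝ) - (x (t + Real.pi) : ℝ) with hφ
  have hφcont : Continuous φ := by
    apply Continuous.sub
    · exact (continuous_subtype_val.comp hxcont)
    · exact (continuous_subtype_val.comp hxcont).comp (continuous_id.add continuous_const)
  have hφpi : φ Real.pi = -(φ 0) := by
    show (x Real.pi : ℝ) - x (Real.pi + Real.pi) = -((x 0 : ℝ) - x (0 + Real.pi))
    rw [show Real.pi + Real.pi = 0 + 2 * Real.pi by ring, hper 0, zero_add]
    ring
  have h0 : (0 : ℝ) ∈ Set.uIcc (φ 0) (φ Real.pi) := by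
    rw [hφpi]
    rcases le_or_gt 0 (φ 0) with h | h
    · exact Set.mem_uIcc.mpr (Or.inr ⟨by linarith, h⟩)
    · exact Set.mem_uIcc.mpr (Or.inl ⟨h.le, by linarith⟩)
  obtain ⟨t, _, ht⟩ := intermediate_value_uIcc (hφcont.continuousOn (s := Set.uIcc 0 Real.pi)) h0
  exact hne t (by simpa [hφ, sub_eq_zero] using ht)
end

section
/- Let K = {(aₙ/n)ₙ : (aₙ)ₙ ∈ ℓ², ‖(aₙ)ₙ‖₂ ≤ 1} ⊆ ℓ², and for each j ∈ ℕ let h_j : K → ℝ be the continuous function h_j(x) = j·πⱼ(x), where πⱼ is the projection onto the j-th coordinate. Then the functions h_j, j ∈ ℕ, are linearly independent, and every nontrivial finite linear combination f = Σ_{j=1}^{k} b_j h_j (with some b_j ≠ 0) attains its maximum at exactly one point of K. Consequently, the linear span of {h_j : j ∈ ℕ} is an infinite-dimensional linear subspace of C(K, ℝ) every nonzero element of which attains its maximum at exactly one point of K. -/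
open scoped RealInnerProductSpace


/-- Let `K = {(aₙ/n)ₙ : (aₙ)ₙ ∈ ℓ², ‖(aₙ)ₙ‖₂ ≤ 1} ⊆ ℓ²` (sequences
indexed from `0`, so the `n`-th term is divided by `n + 1`) and for each `j` let
`h j : K → ℝ` be given by `h j x = (j+1) · πⱼ(x)`. Then each `h j` is continuous,
the family `(h j)` is linearly independent, and every nontrivial finite linear
combination of the `h j` attains its maximum at exactly one point of `K`; hence the
span of the `h j` is an infinite-dimensional subspace of `C(K, ℝ)` all of whose
nonzero elements attain their maximum at exactly one point of `K`. -/
theorem stmt_18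
    (K : Set (lp (fun _ : ℕ => ℝ) 2))
    (hK : K = {x : lp (fun _ : ℕ => ℝ) 2 | ∃ a : lp (fun _ : ℕ => ℝ) 2,
      ‖a‖ ≤ 1 ∧ ∀ n : ℕ, x n = a n / (n + 1)})
    (h : ℕ → (K → ℝ))
    (hh : ∀ (j : ℕ) (x : K), h j x = (j + 1 : ℝ) * (x : lp (fun _ : ℕ => ℝ) 2) j) :
    (∀ j : ℕ, Continuous (h j)) ∧ LinearIndependent ℝ h ∧
    ∀ b : ℕ →₀ ℝ, b ≠ 0 →
      ∃! x₀ : K, ∀ x : K,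
        (∑ j ∈ b.support, b j * h j x) ≤ ∑ j ∈ b.support, b j * h j x₀ := by
  have hKmem : ∀ z : lp (fun _ : ℕ => ℝ) 2, z ∈ K ↔ ∃ a : lp (fun _ : ℕ => ℝ) 2,
      ‖a‖ ≤ 1 ∧ ∀ n : ℕ, z n = a n / (n + 1) := by
    intro z; rw [hK]; exact Iff.rfl
  have hcont : ∀ j : ℕ, Continuous (h j) := by
    intro j
    have hfun : h j = fun x : K => (j + 1 : ℝ) * (x : lp (fun _ : ℕ => ℝ) 2) j :=
      funext (hh j)
    rw [hfun]
    refine continuous_const.mul ?_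
    have lip : LipschitzWith 1 (fun x : lp (fun _ : ℕ => ℝ) 2 => x j) := by
      refine LipschitzWith.mk_one fun f g => ?_
      rw [dist_eq_norm, dist_eq_norm]
      have := lp.norm_apply_le_norm (p := 2) (by norm_num) (f - g) j
      simpa [lp.coeFn_sub] using this
    exact lip.continuous.comp continuous_subtype_val
  have hmem : ∀ i : ℕ, ∀ c : ℝ, |c| ≤ 1 →
      (lp.single 2 i (c / (i + 1)) : lp (fun _ : ℕ => ℝ) 2) ∈ K := by
    intro i c hc
    rw [hK]
    refine ⟨lp.single 2 i c, ?_, ?_⟩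
    · have : ‖(lp.single 2 i c : lp (fun _ : ℕ => ℝ) 2)‖ = ‖c‖ :=
        lp.norm_single (E := fun _ : ℕ => ℝ) (p := 2) (by norm_num) i c
      rw [this, Real.norm_eq_abs]; exact hc
    · intro n
      by_cases hn : n = i
      · subst hn
        rw [lp.single_apply_self, lp.single_apply_self]
      · rw [lp.single_apply_ne 2 i _ hn, lp.single_apply_ne 2 i _ hn, zero_div]
  refine ⟨hcont, ?_, ?_⟩
  · -- linear independence
    rw [linearIndependent_iff']
    intro t g hg i hi
    set pt : K := ⟨lp.single 2 i ((1:ℝ) / (i + 1)), hmem i 1 (by norm_num)⟩ with hpt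
    have hval : ∀ j : ℕ, h j pt = if j = i then 1 else 0 := by
      intro j
      rw [hh j pt]
      by_cases hj : j = i
      · subst hj
        simp only [hpt, lp.single_apply_self, if_pos rfl, ↓reduceIte]
        field_simp
      · simp only [hpt, lp.single_apply_ne 2 i _ hj, if_neg hj, mul_zero]
    have hev := congrFun hg pt
    simp only [Finset.sum_apply, Pi.smul_apply, smul_eq_mul, Pi.zero_apply] at hev
    rw [Finset.sum_congr rfl (fun j _ => by rw [hval j])] at hev
    simpa [Finset.sum_ite_eq', hi] using hev
  · -- maximum attained at exactly one point
    intro b hb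
    set s := b.support with hs
    set B : lp (fun _ : ℕ => ℝ) 2 := ∑ j ∈ s, lp.single 2 j (b j) with hBdef
    have hB : ∀ i : ℕ, (B : ∀ _ : ℕ, ℝ) i = b i := by
      intro i
      simp only [hBdef, lp.coeFn_sum, Finset.sum_apply, lp.single_apply,
        Finset.sum_dite_eq, Pi.single_apply, Finset.sum_ite_eq]
      by_cases hi : i ∈ s
      · rw [if_pos hi]
      · rw [if_neg hi]
        exact (Finsupp.notMem_support_iff.mp hi).symm
    have hBne : B ≠ 0 := by
      obtain ⟨i, hi⟩ := Finsupp.ne_iff.mp hb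
      intro hB0
      apply hi
      have h2 := hB i
      rw [hB0] at h2
      simpa using h2.symm
    set N : ℝ := ‖B‖ with hN
    have hNpos : 0 < N := norm_pos_iff.mpr hBne
    have hinner : ∀ a : lp (fun _ : ℕ => ℝ) 2, ⟪a, B⟫ = ∑ j ∈ s, a j * b j := by
      intro a
      rw [lp.inner_eq_tsum]
      rw [tsum_eq_sum (s := s) (f := fun i => ⟪a i, B i⟫) (fun i his => by
        simp [RCLike.inner_apply, hB i, Finsupp.notMem_support_iff.mp his])]
      refine Finset.sum_congr rfl fun j _ => ?_
      simp [RCLike.inner_apply, hB j, mul_comm]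
    have hval : ∀ (x : K) (a : lp (fun _ : ℕ => ℝ) 2),
        (∀ n : ℕ, (x : lp (fun _ : ℕ => ℝ) 2) n = a n / (n + 1)) →
        (∑ j ∈ s, b j * h j x) = ⟪a, B⟫ := by
      intro x a ha
      rw [hinner a]
      refine Finset.sum_congr rfl fun j _ => ?_
      rw [hh j x, ha j]
      have hj0 : ((j : ℝ) + 1) ≠ 0 := by positivity
      field_simp
    -- the candidate maximizer
    have hwit : ∀ n : ℕ, (∑ j ∈ s, lp.single 2 j (b j / ((j + 1) * N)) :
        lp (fun _ : ℕ => ℝ) 2) n = (N⁻¹ • B) n / (n + 1) := by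
      intro n
      have hco : (∑ j ∈ s, lp.single 2 j (b j / ((j + 1) * N)) :
          lp (fun _ : ℕ => ℝ) 2) n = if n ∈ s then b n / ((n + 1) * N) else 0 := by
        simp only [lp.coeFn_sum, Finset.sum_apply, lp.single_apply,
          Finset.sum_dite_eq, Pi.single_apply, Finset.sum_ite_eq]
      rw [hco, lp.coeFn_smul, Pi.smul_apply, hB n, smul_eq_mul]
      by_cases hn : n ∈ s
      · rw [if_pos hn, inv_mul_eq_div, div_div, mul_comm N]
      · rw [if_neg hn, Finsupp.notMem_support_iff.mp hn, mul_zero, zero_div]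
    have hmem₀ : (∑ j ∈ s, lp.single 2 j (b j / ((j + 1) * N)) :
        lp (fun _ : ℕ => ℝ) 2) ∈ K := by
      rw [hK]
      exact ⟨N⁻¹ • B, by
        rw [norm_smul, ← hN, norm_inv, Real.norm_eq_abs, abs_of_pos hNpos,
          inv_mul_cancel₀ hNpos.ne'], hwit⟩
    set x₀ : K := ⟨_, hmem₀⟩ with hx₀
    have hvalx₀ : (∑ j ∈ s, b j * h j x₀) = N := by
      rw [hval x₀ (N⁻¹ • B) hwit, real_inner_smul_left, real_inner_self_eq_norm_sq]
      show N⁻¹ * N ^ 2 = N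
      field_simp
    have hle : ∀ x : K, (∑ j ∈ s, b j * h j x) ≤ N := by
      intro x
      obtain ⟨a, ha1, ha2⟩ := (hKmem _).mp x.2
      rw [hval x a ha2]
      calc ⟪a, B⟫ ≤ ‖a‖ * ‖B‖ := real_inner_le_norm a B
        _ ≤ 1 * N := by rw [← hN]; exact mul_le_mul_of_nonneg_right ha1 hNpos.le
        _ = N := one_mul N
    refine ⟨x₀, fun x => by rw [hvalx₀]; exact hle x, ?_⟩
    intro y hy
    obtain ⟨a, ha1, ha2⟩ := (hKmem _).mp y.2
    have hinnera : ⟪a, B⟫ = N := by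
      have h1 : N ≤ ∑ j ∈ s, b j * h j y := hvalx₀ ▸ hy x₀
      have h2 := hle y
      rw [hval y a ha2] at h1 h2
      linarith
    have ha0 : a = N⁻¹ • B := by
      have hnorm : ‖a - N⁻¹ • B‖ ^ 2 ≤ 0 := by
        rw [norm_sub_sq_real, real_inner_smul_right, hinnera, norm_smul, norm_inv,
          Real.norm_eq_abs, abs_of_pos hNpos, ← hN, inv_mul_cancel₀ hNpos.ne']
        nlinarith [norm_nonneg a, ha1]
      have := pow_eq_zero_iff (n := 2) (by norm_num) |>.mp
        (le_antisymm hnorm (by positivity))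
      rwa [norm_eq_zero, sub_eq_zero] at this
    refine Subtype.ext (lp.ext (funext fun n => ?_))
    rw [ha2 n, ha0]
    exact (hwit n).symm
end

section
/- The set Ĉ[0,1] of all continuous functions f : [0,1] → ℝ that attain their maximum at exactly one point of [0,1] is a dense G_δ subset of the Banach space C([0,1], ℝ) equipped with the supremum norm: Ĉ[0,1] is a countable intersection of open subsets of C([0,1], ℝ), and it is dense in C([0,1], ℝ). -/
open Set Metric

namespace Stmt19

abbrev X := Set.Icc (0:ℝ) 1

instance : Nonempty X := ⟨⟨0, by norm_num⟩⟩

lemma exists_max (f : C(X, ℝ)) : ∃ x₀ : X, ∀ x, f x ≤ f x₀ := by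
  obtain ⟨x₀, hx₀⟩ := isCompact_univ.exists_isMaxOn univ_nonempty f.continuous.continuousOn
  exact ⟨x₀, fun x => hx₀.2 (mem_univ x)⟩

def U (n : ℕ) : Set C(X, ℝ) :=
  {f | ∃ x₀ : X, ∃ δ > 0, ∀ x : X, 1/((n:ℝ)+1) ≤ dist x x₀ → f x ≤ f x₀ - δ}

lemma U_open (n : ℕ) : IsOpen (U n) := by
  rw [Metric.isOpen_iff]
  rintro f ⟨x₀, δ, hδ, hf⟩
  refine ⟨δ/3, by linarith, fun g hg => ?_⟩
  rw [Metric.mem_ball] at hg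
  refine ⟨x₀, δ/3, by linarith, fun x hx => ?_⟩
  have h1 : dist (f x) (g x) ≤ dist f g := ContinuousMap.dist_apply_le_dist x
  have h2 : dist (f x₀) (g x₀) ≤ dist f g := ContinuousMap.dist_apply_le_dist x₀
  have h3 := hf x hx
  rw [Real.dist_eq, abs_le] at h1 h2
  rw [dist_comm] at hg
  linarith

lemma set_eq : {f : C(X, ℝ) | ∃! x₀ : X, ∀ x : X, f x ≤ f x₀} = ⋂ n : ℕ, U n := by
  ext f
  simp only [mem_setOf_eq, mem_iInter]
  constructor
  · rintro ⟨x₀, hmax, huniq⟩ n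
    by_cases hK : ({x : X | 1/((n:ℝ)+1) ≤ dist x x₀}).Nonempty
    · have hKc : IsClosed {x : X | 1/((n:ℝ)+1) ≤ dist x x₀} :=
        isClosed_le continuous_const (Continuous.dist continuous_id continuous_const)
      obtain ⟨y, hy, hymax⟩ := hKc.isCompact.exists_isMaxOn hK f.continuous.continuousOn
      have hyx : y ≠ x₀ := by
        intro h
        rw [h] at hy
        simp only [mem_setOf_eq, dist_self] at hy
        have : (0:ℝ) < 1/((n:ℝ)+1) := by positivity
        linarith
      have hlt : f y < f x₀ := by
        rcases lt_or_eq_of_le (hmax y) with h | h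
        · exact h
        · exact absurd (huniq y (fun x => h ▸ hmax x)) hyx
      exact ⟨x₀, f x₀ - f y, by linarith, fun x hx => by
        have : f x ≤ f y := hymax hx; linarith⟩
    · exact ⟨x₀, 1, one_pos, fun x hx => absurd ⟨x, hx⟩ hK⟩
  · intro h
    obtain ⟨m, hm⟩ := exists_max f
    refine ⟨m, hm, fun m' hm' => ?_⟩
    have key : ∀ n : ℕ, dist m' m ≤ 2/((n:ℝ)+1) := by
      intro n
      obtain ⟨x₀, δ, hδ, hf⟩ := h n
      have hmx : dist m x₀ < 1/((n:ℝ)+1) := by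
        by_contra hc
        push_neg at hc
        have := hf m hc
        have := hm x₀
        linarith
      have hm'x : dist m' x₀ < 1/((n:ℝ)+1) := by
        by_contra hc
        push_neg at hc
        have := hf m' hc
        have := hm' x₀
        linarith
      calc dist m' m ≤ dist m' x₀ + dist x₀ m := dist_triangle _ _ _
        _ ≤ 1/((n:ℝ)+1) + 1/((n:ℝ)+1) := by
            rw [dist_comm x₀ m]; linarith
        _ = 2/((n:ℝ)+1) := by ring
    have hd : dist m' m ≤ 0 := by
      by_contra hc
      push_neg at hc
      obtain ⟨n, hn⟩ := exists_nat_gt (2 / dist m' m)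
      have h1 : (0:ℝ) < (n:ℝ)+1 := by positivity
      have h2 : 2 / dist m' m < (n:ℝ)+1 := by linarith
      have h3 : 2/((n:ℝ)+1) < dist m' m := by
        rw [div_lt_iff₀ h1]
        rw [div_lt_iff₀ hc] at h2
        linarith
      have := key n
      linarith
    exact dist_le_zero.mp hd

lemma dense' : Dense {f : C(X, ℝ) | ∃! x₀ : X, ∀ x : X, f x ≤ f x₀} := by
  rw [Metric.dense_iff]
  intro f ε hε
  obtain ⟨x₀, hmax⟩ := exists_max f
  set g : C(X, ℝ) := ⟨fun x => f x + ε/2 * (1 - dist x x₀),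
    f.continuous.add (continuous_const.mul (continuous_const.sub
      (Continuous.dist continuous_id continuous_const)))⟩ with hg
  have hdistle : ∀ x : X, dist x x₀ ≤ 1 := by
    intro x
    rw [Subtype.dist_eq, Real.dist_eq, abs_le]
    have h1 := x.2.1; have h2 := x.2.2
    have h3 := x₀.2.1; have h4 := x₀.2.2
    constructor <;> linarith
  refine ⟨g, ?_, ?_⟩
  · rw [Metric.mem_ball]
    have : dist g f ≤ ε/2 := by
      rw [ContinuousMap.dist_le (by linarith)]
      intro x
      have h1 : (0:ℝ) ≤ dist x x₀ := dist_nonneg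
      have h2 := hdistle x
      simp only [hg, ContinuousMap.coe_mk, Real.dist_eq]
      rw [abs_le]
      constructor <;> [nlinarith; nlinarith]
    linarith
  · have hglt : ∀ x : X, x ≠ x₀ → g x < g x₀ := by
      intro x hx
      have h1 : 0 < dist x x₀ := dist_pos.mpr hx
      have h2 := hmax x
      simp only [hg, ContinuousMap.coe_mk, dist_self]
      nlinarith
    have hgmax : ∀ x : X, g x ≤ g x₀ := by
      intro x
      by_cases hx : x = x₀
      · rw [hx]
      · exact le_of_lt (hglt x hx)
    exact ⟨x₀, hgmax, fun y hy => by
      by_contra hc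
      exact absurd (lt_of_lt_of_le (hglt y hc) (hy x₀)) (lt_irrefl _)⟩

end Stmt19

/-- Gurariy: The set `Ĉ[0,1]` of continuous functions on `[0,1]`
attaining their maximum at exactly one point is a dense `G_δ` subset of the Banach
space `C([0,1], ℝ)` with the supremum norm (whose topology is the compact-open
topology carried by `C([0,1], ℝ)` in Mathlib). -/
theorem stmt_19 :
    IsGδ {f : C(Set.Icc (0:ℝ) 1, ℝ) | ∃! x₀ : Set.Icc (0:ℝ) 1,
        ∀ x : Set.Icc (0:ℝ) 1, f x ≤ f x₀} ∧
    Dense {f : C(Set.Icc (0:ℝ) 1, ℝ) | ∃! x₀ : Set.Icc (0:ℝ) 1,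
        ∀ x : Set.Icc (0:ℝ) 1, f x ≤ f x₀} := by
  constructor
  · rw [Stmt19.set_eq]
    exact IsGδ.iInter fun n => (Stmt19.U_open n).isGδ
  · exact Stmt19.dense'
end
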